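/- Let G be a finite group, k a field of characteristic zero, and D(G) = k(G) ⋊ kG the Drinfeld double algebra. Fix for each conjugacy class C ⊆ G a basepoint s₀ ∈ C and for each s ∈ C an element g_s ∈ G with g_s s₀ g_s⁻¹ = s. For a conjugacy class C with basepoint s₀ and a centrally primitive idempotent f of the group algebra k[C_G(s₀)] (written f = Σ_{w ∈ C_G(s₀)} f(w) w), define e_{C,f} ∈ D(G) by e_{C,f}(s,u) = f(g_s⁻¹ u g_s) if s ∈ C and u ∈ C_G(s), and e_{C,f}(s,u) = 0 otherwise. Then e_{C,f} is a centrally primitive idempotent of D(G), it does not depend on the choice of the elements g_s, and the map (C, f) ↦ e_{C,f} is a bijection from the set of pairs (conjugacy class C of G, centrally primitive idempotent f of k[C_G(s₀)]) onto the set of centrally primitive idempotents of D(G). -/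

import Mathlib

attribute [local instance] Classical.propDecidable

/-- The product of the Drinfeld double algebra `D(G) = k(G) ⋊ kG`, realised on the
space of functions `G × G → k`.  On the basis `{δ_s ⊗ u}` of indicator functions it is
`(δ_s ⊗ u)(δ_t ⊗ v) = δ_{s, utu⁻¹} (δ_s ⊗ uv)`. -/
def drinfeldDoubleMul {k : Type*} [Field k] {G : Type*} [Group G] [Fintype G]
    (f g : G × G → k) : G × G → k :=
  fun p => ∑ u : G, f (p.1, u) * g (u⁻¹ * p.1 * u, u⁻¹ * p.2)

/-- An element `e` is a *centrally primitive idempotent* for a multiplication `mul` if it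
is a nonzero central idempotent that cannot be written as `e = e' + e''` with `e', e''`
nonzero central idempotents satisfying `e' e'' = 0`. -/
def IsCentrallyPrimitiveFor {α : Type*} [Zero α] [Add α] (mul : α → α → α) (e : α) : Prop :=
  e ≠ 0 ∧ (∀ x, mul e x = mul x e) ∧ mul e e = e ∧
    ¬ ∃ e' e'' : α, e' ≠ 0 ∧ e'' ≠ 0 ∧
        (∀ x, mul e' x = mul x e') ∧ (∀ x, mul e'' x = mul x e'') ∧
        mul e' e' = e' ∧ mul e'' e'' = e'' ∧ mul e' e'' = 0 ∧ e = e' + e''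

/-- The coefficient function of an element of the group algebra `k[H]` of a subgroup
`H ≤ G`, extended by zero to all of `G`.  For `f = Σ_{w ∈ H} f(w) w` this returns `f(w)`
for `w ∈ H` and `0` otherwise. -/
noncomputable def subgroupCoeff {k : Type*} [Semiring k] {G : Type*} [Group G]
    (H : Subgroup G) (f : MonoidAlgebra k ↥H) (w : G) : k :=
  if h : w ∈ H then f.coeff ⟨w, h⟩ else 0

/-- The element `e_{C,f}` of `D(G)`: given a conjugacy class `C = mk⁻¹(c)` with
basepoint `s₀ = b c`, elements `g_s` with `g_s s₀ g_s⁻¹ = s`, and an element `f` of the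
group algebra of the centralizer `C_G(s₀)`, set `e_{C,f}(s,u) = f(g_s⁻¹ u g_s)` if
`s ∈ C` and `u ∈ C_G(s)`, and `e_{C,f}(s,u) = 0` otherwise. -/
noncomputable def doubleClassIdempotent {k : Type*} [Semiring k] {G : Type*} [Group G]
    (b : ConjClasses G → G) (g : G → G) (c : ConjClasses G)
    (f : MonoidAlgebra k ↥(Subgroup.centralizer ({b c} : Set G))) : G × G → k :=
  fun p =>
    if ConjClasses.mk p.1 = c then
      subgroupCoeff (Subgroup.centralizer ({b c} : Set G)) f ((g p.1)⁻¹ * p.2 * g p.1)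
    else 0

section DD
open Finset
variable {k : Type*} [Field k] {G : Type*} [Group G] [Fintype G]

set_option linter.unusedSectionVars false

theorem dd_add_left (x y z : G × G → k) :
    drinfeldDoubleMul (x + y) z = drinfeldDoubleMul x z + drinfeldDoubleMul y z := by
  funext p
  simp [drinfeldDoubleMul, add_mul, Finset.sum_add_distrib]

theorem dd_add_right (x y z : G × G → k) :
    drinfeldDoubleMul x (y + z) = drinfeldDoubleMul x y + drinfeldDoubleMul x z := by
  funext p
  simp [drinfeldDoubleMul, mul_add, Finset.sum_add_distrib]

theorem dd_sub_left (x y z : G × G → k) :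
    drinfeldDoubleMul (x - y) z = drinfeldDoubleMul x z - drinfeldDoubleMul y z := by
  funext p
  simp [drinfeldDoubleMul, sub_mul, Finset.sum_sub_distrib]

theorem dd_sub_right (x y z : G × G → k) :
    drinfeldDoubleMul x (y - z) = drinfeldDoubleMul x y - drinfeldDoubleMul x z := by
  funext p
  simp [drinfeldDoubleMul, mul_sub, Finset.sum_sub_distrib]

theorem dd_assoc (x y z : G × G → k) :
    drinfeldDoubleMul (drinfeldDoubleMul x y) z = drinfeldDoubleMul x (drinfeldDoubleMul y z) := by
  funext p
  simp only [drinfeldDoubleMul, Finset.sum_mul, Finset.mul_sum]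
  rw [Finset.sum_comm]
  refine Finset.sum_congr rfl fun v _ => ?_
  refine Fintype.sum_equiv (Equiv.mulLeft v⁻¹) _ _ fun u => ?_
  simp only [Equiv.coe_mulLeft]
  rw [show (v⁻¹ * u)⁻¹ * (v⁻¹ * p.1 * v) * (v⁻¹ * u) = u⁻¹ * p.1 * u by group,
    show (v⁻¹ * u)⁻¹ * (v⁻¹ * p.2) = u⁻¹ * p.2 by group, mul_assoc]

theorem dd_central_mul (x y : G × G → k)
    (hx : ∀ z, drinfeldDoubleMul x z = drinfeldDoubleMul z x)
    (hy : ∀ z, drinfeldDoubleMul y z = drinfeldDoubleMul z y) :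
    ∀ z, drinfeldDoubleMul (drinfeldDoubleMul x y) z
      = drinfeldDoubleMul z (drinfeldDoubleMul x y) := by
  intro z
  rw [dd_assoc, hy z, ← dd_assoc, hx z, dd_assoc]

theorem dd_central_sub (x y : G × G → k)
    (hx : ∀ z, drinfeldDoubleMul x z = drinfeldDoubleMul z x)
    (hy : ∀ z, drinfeldDoubleMul y z = drinfeldDoubleMul z y) :
    ∀ z, drinfeldDoubleMul (x - y) z = drinfeldDoubleMul z (x - y) := by
  intro z
  rw [dd_sub_left, dd_sub_right, hx z, hy z]

/-! ### Group algebra lemmas -/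

theorem ga_conv {Γ : Type*} [Group Γ] [Fintype Γ] (f g : MonoidAlgebra k Γ) (x : Γ) :
    (f * g).coeff x = ∑ w : Γ, f.coeff w * g.coeff (w⁻¹ * x) := by
  have hf : f = ∑ w : Γ, MonoidAlgebra.single w (f.coeff w) := by
    ext a
    rw [MonoidAlgebra.coeff_sum, Finsupp.finset_sum_apply]
    simp [MonoidAlgebra.coeff_single, Finsupp.single_apply]
  conv_lhs => rw [hf]
  rw [Finset.sum_mul, MonoidAlgebra.coeff_sum, Finsupp.finset_sum_apply]
  simp [MonoidAlgebra.coeff_single_mul_apply]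

theorem ga_conj_of_central {Γ : Type*} [Group Γ] (f : MonoidAlgebra k Γ)
    (hf : ∀ y, f * y = y * f) (a x : Γ) :
    f.coeff (a⁻¹ * x * a) = f.coeff x := by
  have h : (f * MonoidAlgebra.single a 1 : MonoidAlgebra k Γ).coeff (x * a)
      = (MonoidAlgebra.single a 1 * f : MonoidAlgebra k Γ).coeff (x * a) := by
    rw [hf]
  simp only [MonoidAlgebra.coeff_mul_single_apply, MonoidAlgebra.coeff_single_mul_apply, one_mul,
    mul_one, mul_inv_cancel_right] at h
  rw [← mul_assoc] at h
  exact h.symm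

theorem ga_central_of_conj {Γ : Type*} [Group Γ] [Fintype Γ] (f : MonoidAlgebra k Γ)
    (h : ∀ a x : Γ, f.coeff (a⁻¹ * x * a) = f.coeff x) :
    ∀ y, f * y = y * f := by
  intro y
  ext x
  rw [ga_conv, ga_conv]
  refine Fintype.sum_equiv ((Equiv.inv Γ).trans (Equiv.mulRight x)) _ _ fun w => ?_
  simp only [Equiv.trans_apply, Equiv.inv_apply, Equiv.coe_mulRight]
  rw [show (w⁻¹ * x)⁻¹ * x = x⁻¹ * w * x by group, h x w, mul_comm]

/-! ### Central elements of the double -/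

theorem dd_delta_right (x : G × G → k) (t v s m : G) :
    drinfeldDoubleMul x (fun p => if p = (t, v) then (1:k) else 0) (s, m)
      = if (m * v⁻¹)⁻¹ * s * (m * v⁻¹) = t then x (s, m * v⁻¹) else 0 := by
  simp only [drinfeldDoubleMul]
  rw [Finset.sum_eq_single (m * v⁻¹)]
  · by_cases h : (m * v⁻¹)⁻¹ * s * (m * v⁻¹) = t
    · rw [if_pos, if_pos h, mul_one]
      rw [Prod.mk.injEq]
      exact ⟨h, by group⟩
    · rw [if_neg, if_neg h, mul_zero]
      rw [Prod.mk.injEq]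
      rintro ⟨h1, -⟩
      exact h h1
  · intro u _ hu
    rw [if_neg, mul_zero]
    rw [Prod.mk.injEq]
    rintro ⟨-, h2⟩
    exact hu (by rw [← h2]; group)
  · intro h
    exact absurd (Finset.mem_univ _) h

theorem dd_delta_left (x : G × G → k) (t v s m : G) :
    drinfeldDoubleMul (fun p => if p = (t, v) then (1:k) else 0) x (s, m)
      = if s = t then x (v⁻¹ * s * v, v⁻¹ * m) else 0 := by
  simp only [drinfeldDoubleMul]
  rw [Finset.sum_eq_single v]
  · by_cases h : s = t
    · rw [if_pos, if_pos h, one_mul]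
      rw [Prod.mk.injEq]
      exact ⟨h, rfl⟩
    · rw [if_neg, if_neg h, zero_mul]
      rw [Prod.mk.injEq]
      rintro ⟨h1, -⟩
      exact h h1
  · intro u _ hu
    rw [if_neg, zero_mul]
    rw [Prod.mk.injEq]
    rintro ⟨-, h2⟩
    exact hu h2
  · intro h
    exact absurd (Finset.mem_univ _) h

theorem dd_central_master (x : G × G → k)
    (hx : ∀ z, drinfeldDoubleMul x z = drinfeldDoubleMul z x) (s m t v : G) :
    (if (m * v⁻¹)⁻¹ * s * (m * v⁻¹) = t then x (s, m * v⁻¹) else 0)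
      = if s = t then x (v⁻¹ * s * v, v⁻¹ * m) else 0 := by
  rw [← dd_delta_right x t v s m, ← dd_delta_left x t v s m, hx]

theorem dd_central_supp (x : G × G → k)
    (hx : ∀ z, drinfeldDoubleMul x z = drinfeldDoubleMul z x) (s u : G)
    (h : ¬ u⁻¹ * s * u = s) : x (s, u) = 0 := by
  have key := dd_central_master x hx s u (u⁻¹ * s * u) 1
  rw [show u * (1:G)⁻¹ = u by group, if_pos rfl, if_neg (fun hc => h hc.symm)] at key
  exact key

theorem dd_central_conj (x : G × G → k)
    (hx : ∀ z, drinfeldDoubleMul x z = drinfeldDoubleMul z x) (s u v : G) :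
    x (v⁻¹ * s * v, v⁻¹ * u * v) = x (s, u) := by
  by_cases h : u⁻¹ * s * u = s
  · have key := dd_central_master x hx s (u * v) s v
    rw [show u * v * v⁻¹ = u by group] at key
    rw [if_pos h, if_pos rfl] at key
    rw [show v⁻¹ * u * v = v⁻¹ * (u * v) by group]
    exact key.symm
  · rw [dd_central_supp x hx s u h, dd_central_supp x hx _ _ ?_]
    intro hc
    apply h
    have h2 : v⁻¹ * (u⁻¹ * s * u) * v = v⁻¹ * s * v := by rw [← hc]; group
    exact mul_left_cancel (mul_right_cancel h2)

theorem mk_conj (s u : G) : ConjClasses.mk (u⁻¹ * s * u) = ConjClasses.mk s :=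
  ConjClasses.mk_eq_mk_iff_isConj.2 (isConj_iff.2 ⟨u, by group⟩)

/-! ### subgroupCoeff lemmas -/

theorem coeff_mem (H : Subgroup G) (f : MonoidAlgebra k ↥H) (w : G)
    (h : subgroupCoeff H f w ≠ 0) : w ∈ H := by
  by_contra hc
  rw [subgroupCoeff, dif_neg hc] at h
  exact h rfl

theorem coeff_conj (H : Subgroup G) (f : MonoidAlgebra k ↥H)
    (hf : ∀ y, f * y = y * f) (h : G) (hh : h ∈ H) (w : G) :
    subgroupCoeff H f (h⁻¹ * w * h) = subgroupCoeff H f w := by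
  by_cases hw : w ∈ H
  · have hw' : h⁻¹ * w * h ∈ H := H.mul_mem (H.mul_mem (H.inv_mem hh) hw) hh
    rw [subgroupCoeff, subgroupCoeff, dif_pos hw', dif_pos hw]
    have harg : (⟨h⁻¹ * w * h, hw'⟩ : ↥H) = (⟨h, hh⟩ : ↥H)⁻¹ * ⟨w, hw⟩ * ⟨h, hh⟩ := by
      ext
      simp
    rw [harg]
    exact ga_conj_of_central f hf _ _
  · have hw' : ¬ (h⁻¹ * w * h ∈ H) := by
      intro hc
      apply hw
      have : h * (h⁻¹ * w * h) * h⁻¹ ∈ H := H.mul_mem (H.mul_mem hh hc) (H.inv_mem hh)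
      rwa [show h * (h⁻¹ * w * h) * h⁻¹ = w by group] at this
    rw [subgroupCoeff, subgroupCoeff, dif_neg hw', dif_neg hw]

theorem coeff_sum_aux (H : Subgroup G) (T : G → k) (hT : ∀ w, w ∉ H → T w = 0) :
    ∑ w : G, T w = ∑ v : ↥H, T ↑v := by
  have h2 : ∑ w ∈ Finset.univ.filter (· ∈ H), T w = ∑ v : ↥H, T ↑v :=
    Finset.sum_subtype (p := (· ∈ H)) _ (fun x => by simp) T
  rw [← Finset.sum_filter_add_sum_filter_not Finset.univ (· ∈ H) T,
    Finset.sum_eq_zero (fun w hw => hT w (Finset.mem_filter.1 hw).2), add_zero, h2]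

theorem coeff_mul (H : Subgroup G) (f f' : MonoidAlgebra k ↥H) (y : G) :
    ∑ w : G, subgroupCoeff H f w * subgroupCoeff H f' (w⁻¹ * y)
      = subgroupCoeff H (f * f') y := by
  by_cases hy : y ∈ H
  · rw [subgroupCoeff, dif_pos hy, ga_conv,
      coeff_sum_aux H _ (fun w hw => by rw [subgroupCoeff, dif_neg hw, zero_mul])]
    refine Finset.sum_congr rfl fun v _ => ?_
    rw [subgroupCoeff, dif_pos v.2, Subtype.coe_eta, subgroupCoeff,
      dif_pos (H.mul_mem (H.inv_mem v.2) hy)]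
    congr 1
  · rw [subgroupCoeff, dif_neg hy]
    refine Finset.sum_eq_zero fun w _ => ?_
    by_cases hw : w ∈ H
    · have h0 : subgroupCoeff H f' (w⁻¹ * y) = 0 := by
        rw [subgroupCoeff, dif_neg]
        intro hc
        apply hy
        have : w * (w⁻¹ * y) ∈ H := H.mul_mem hw hc
        rwa [show w * (w⁻¹ * y) = y by group] at this
      rw [h0, mul_zero]
    · rw [subgroupCoeff, dif_neg hw, zero_mul]
end DD

section Eclass
open Finset
set_option linter.unusedSectionVars false
variable {k : Type*} [Field k] {G : Type*} [Group G] [Fintype G]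
variable (b : ConjClasses G → G) (g : G → G) (c : ConjClasses G)

theorem E_apply (f : MonoidAlgebra k ↥(Subgroup.centralizer ({b c} : Set G))) (s u : G) :
    doubleClassIdempotent b g c f (s, u)
      = if ConjClasses.mk s = c then
          subgroupCoeff (Subgroup.centralizer ({b c} : Set G)) f ((g s)⁻¹ * u * g s)
        else 0 := by
  unfold doubleClassIdempotent
  split_ifs <;> rfl

theorem gs2 (hg : ∀ s : G, g s * b (ConjClasses.mk s) * (g s)⁻¹ = s) {s : G}
    (hs : ConjClasses.mk s = c) : (g s)⁻¹ * s * g s = b c := by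
  have h := hg s
  rw [hs] at h
  have key : (g s)⁻¹ * (g s * b c * (g s)⁻¹) * g s = b c := by group
  rwa [h] at key

theorem key_centralize (hg : ∀ s : G, g s * b (ConjClasses.mk s) * (g s)⁻¹ = s) {s : G}
    (hs : ConjClasses.mk s = c) (u : G)
    (hu : (g s)⁻¹ * u * g s ∈ Subgroup.centralizer ({b c} : Set G)) :
    u⁻¹ * s * u = s := by
  rw [Subgroup.mem_centralizer_singleton_iff, ← gs2 b g c hg hs] at hu
  have h3 : (g s)⁻¹ * (u * s) * g s = (g s)⁻¹ * (s * u) * g s := by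
    rw [show (g s)⁻¹ * (u * s) * g s = (g s)⁻¹ * u * g s * ((g s)⁻¹ * s * g s) by group,
      show (g s)⁻¹ * (s * u) * g s = (g s)⁻¹ * s * g s * ((g s)⁻¹ * u * g s) by group]
    exact hu
  have h2 : u * s = s * u := mul_left_cancel (mul_right_cancel h3)
  rw [mul_assoc, ← h2]
  group

theorem cocycle_mem (hg : ∀ s : G, g s * b (ConjClasses.mk s) * (g s)⁻¹ = s) {s : G} (u : G)
    (hs : ConjClasses.mk s = c) :
    (g s)⁻¹ * u * g (u⁻¹ * s * u) ∈ Subgroup.centralizer ({b c} : Set G) := by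
  rw [Subgroup.mem_centralizer_singleton_iff]
  have h1 : (g s)⁻¹ * s * g s = b c := gs2 b g c hg hs
  have h2 : (g (u⁻¹ * s * u))⁻¹ * (u⁻¹ * s * u) * g (u⁻¹ * s * u) = b c :=
    gs2 b g c hg (by rw [mk_conj]; exact hs)
  have key : ((g s)⁻¹ * u * g (u⁻¹ * s * u)) * b c * ((g s)⁻¹ * u * g (u⁻¹ * s * u))⁻¹
      = b c := by
    conv_lhs => rw [← h2]
    conv_rhs => rw [← h1]
    group
  calc (g s)⁻¹ * u * g (u⁻¹ * s * u) * b c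
      = (((g s)⁻¹ * u * g (u⁻¹ * s * u)) * b c * ((g s)⁻¹ * u * g (u⁻¹ * s * u))⁻¹)
        * ((g s)⁻¹ * u * g (u⁻¹ * s * u)) := by group
    _ = b c * ((g s)⁻¹ * u * g (u⁻¹ * s * u)) := by rw [key]

theorem E_central (hg : ∀ s : G, g s * b (ConjClasses.mk s) * (g s)⁻¹ = s)
    (f : MonoidAlgebra k ↥(Subgroup.centralizer ({b c} : Set G)))
    (hf : ∀ y, f * y = y * f) (x : G × G → k) :
    drinfeldDoubleMul (doubleClassIdempotent b g c f) x
      = drinfeldDoubleMul x (doubleClassIdempotent b g c f) := by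
  funext p
  obtain ⟨s, t⟩ := p
  simp only [drinfeldDoubleMul, E_apply]
  by_cases hs : ConjClasses.mk s = c
  · calc
      ∑ u : G, (if ConjClasses.mk s = c then
            subgroupCoeff (Subgroup.centralizer ({b c} : Set G)) f ((g s)⁻¹ * u * g s) else 0)
          * x (u⁻¹ * s * u, u⁻¹ * t)
        = ∑ u : G, subgroupCoeff (Subgroup.centralizer ({b c} : Set G)) f ((g s)⁻¹ * u * g s)
            * x (s, u⁻¹ * t) := by
          refine Finset.sum_congr rfl fun u _ => ?_
          rw [if_pos hs]
          by_cases hF : subgroupCoeff (Subgroup.centralizer ({b c} : Set G)) f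
              ((g s)⁻¹ * u * g s) = 0
          · rw [hF, zero_mul, zero_mul]
          · rw [key_centralize b g c hg hs u (coeff_mem _ f _ hF)]
      _ = ∑ u : G, x (s, u)
            * subgroupCoeff (Subgroup.centralizer ({b c} : Set G)) f ((g s)⁻¹ * (t * u⁻¹) * g s) := by
          refine Fintype.sum_equiv ((Equiv.inv G).trans (Equiv.mulRight t)) _ _ fun u => ?_
          simp only [Equiv.trans_apply, Equiv.inv_apply, Equiv.coe_mulRight]
          rw [show t * (u⁻¹ * t)⁻¹ = u by group, mul_comm]
      _ = ∑ u : G, x (s, u)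
            * (if ConjClasses.mk (u⁻¹ * s * u) = c then
                subgroupCoeff (Subgroup.centralizer ({b c} : Set G)) f
                  ((g (u⁻¹ * s * u))⁻¹ * (u⁻¹ * t) * g (u⁻¹ * s * u)) else 0) := by
          refine Finset.sum_congr rfl fun u _ => ?_
          rw [if_pos (by rw [mk_conj]; exact hs)]
          congr 1
          rw [show (g (u⁻¹ * s * u))⁻¹ * (u⁻¹ * t) * g (u⁻¹ * s * u)
              = ((g s)⁻¹ * u * g (u⁻¹ * s * u))⁻¹ * ((g s)⁻¹ * (t * u⁻¹) * g s)
                * ((g s)⁻¹ * u * g (u⁻¹ * s * u)) by group,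
            coeff_conj _ f hf _ (cocycle_mem b g c hg u hs) _]
  · refine Finset.sum_congr rfl fun u _ => ?_
    rw [if_neg hs, zero_mul, if_neg (fun hc => hs (by rwa [mk_conj] at hc)), mul_zero]

theorem E_mul (hg : ∀ s : G, g s * b (ConjClasses.mk s) * (g s)⁻¹ = s)
    (f f' : MonoidAlgebra k ↥(Subgroup.centralizer ({b c} : Set G))) :
    drinfeldDoubleMul (doubleClassIdempotent b g c f) (doubleClassIdempotent b g c f')
      = doubleClassIdempotent b g c (f * f') := by
  funext p
  obtain ⟨s, t⟩ := p
  simp only [drinfeldDoubleMul, E_apply]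
  by_cases hs : ConjClasses.mk s = c
  · rw [if_pos hs]
    calc
      ∑ u : G, (if ConjClasses.mk s = c then
            subgroupCoeff (Subgroup.centralizer ({b c} : Set G)) f ((g s)⁻¹ * u * g s) else 0)
          * (if ConjClasses.mk (u⁻¹ * s * u) = c then
              subgroupCoeff (Subgroup.centralizer ({b c} : Set G)) f'
                ((g (u⁻¹ * s * u))⁻¹ * (u⁻¹ * t) * g (u⁻¹ * s * u)) else 0)
        = ∑ u : G, subgroupCoeff (Subgroup.centralizer ({b c} : Set G)) f ((g s)⁻¹ * u * g s)
            * subgroupCoeff (Subgroup.centralizer ({b c} : Set G)) f'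
                ((g s)⁻¹ * (u⁻¹ * t) * g s) := by
          refine Finset.sum_congr rfl fun u _ => ?_
          rw [if_pos hs]
          by_cases hF : subgroupCoeff (Subgroup.centralizer ({b c} : Set G)) f
              ((g s)⁻¹ * u * g s) = 0
          · rw [hF, zero_mul, zero_mul]
          · rw [key_centralize b g c hg hs u (coeff_mem _ f _ hF), if_pos hs]
      _ = ∑ w : G, subgroupCoeff (Subgroup.centralizer ({b c} : Set G)) f w
            * subgroupCoeff (Subgroup.centralizer ({b c} : Set G)) f'
                (w⁻¹ * ((g s)⁻¹ * t * g s)) := by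
          refine Fintype.sum_equiv ((Equiv.mulLeft (g s)⁻¹).trans (Equiv.mulRight (g s))) _ _
            fun u => ?_
          simp only [Equiv.trans_apply, Equiv.coe_mulLeft, Equiv.coe_mulRight]
          rw [show ((g s)⁻¹ * u * g s)⁻¹ * ((g s)⁻¹ * t * g s) = (g s)⁻¹ * (u⁻¹ * t) * g s
            by group]
      _ = subgroupCoeff (Subgroup.centralizer ({b c} : Set G)) (f * f') ((g s)⁻¹ * t * g s) :=
          coeff_mul _ f f' _
  · rw [if_neg hs]
    refine Finset.sum_eq_zero fun u _ => ?_
    rw [if_neg hs, zero_mul]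
end Eclass

section Phi
open Finset
set_option linter.unusedSectionVars false
variable {k : Type*} [Field k] {G : Type*} [Group G] [Fintype G]
variable (b : ConjClasses G → G) (g : G → G) (c : ConjClasses G)

noncomputable def PhiD (x : G × G → k) :
    MonoidAlgebra k ↥(Subgroup.centralizer ({b c} : Set G)) :=
  MonoidAlgebra.ofCoeff
    (Finsupp.equivFunOnFinite.symm (fun w : ↥(Subgroup.centralizer ({b c} : Set G)) => x (b c, ↑w)))

theorem Phi_apply (x : G × G → k) (w : ↥(Subgroup.centralizer ({b c} : Set G))) :
    (PhiD b c x).coeff w = x (b c, ↑w) := rfl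

theorem Phi_add (x y : G × G → k) : PhiD b c (x + y) = PhiD b c x + PhiD b c y := by
  ext w
  rw [MonoidAlgebra.coeff_add, Finsupp.add_apply, Phi_apply, Phi_apply, Phi_apply, Pi.add_apply]

theorem Phi_zero : PhiD b c (0 : G × G → k) = 0 := by
  ext w
  rw [Phi_apply]
  rfl

theorem E_add (f f' : MonoidAlgebra k ↥(Subgroup.centralizer ({b c} : Set G))) :
    doubleClassIdempotent b g c (f + f')
      = doubleClassIdempotent b g c f + doubleClassIdempotent b g c f' := by
  funext p
  simp only [doubleClassIdempotent, Pi.add_apply, subgroupCoeff]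
  by_cases hs : ConjClasses.mk p.1 = c
  · rw [if_pos hs, if_pos hs, if_pos hs]
    by_cases hw : (g p.1)⁻¹ * p.2 * g p.1 ∈ Subgroup.centralizer ({b c} : Set G)
    · rw [dif_pos hw, dif_pos hw, dif_pos hw]
      rfl
    · rw [dif_neg hw, dif_neg hw, dif_neg hw, add_zero]
  · rw [if_neg hs, if_neg hs, if_neg hs, add_zero]

theorem E_zero : doubleClassIdempotent b g c (0 : MonoidAlgebra k _) = 0 := by
  funext p
  simp only [doubleClassIdempotent, subgroupCoeff, Pi.zero_apply]
  by_cases hs : ConjClasses.mk p.1 = c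
  · rw [if_pos hs]
    by_cases hw : (g p.1)⁻¹ * p.2 * g p.1 ∈ Subgroup.centralizer ({b c} : Set G)
    · rw [dif_pos hw]
      rfl
    · rw [dif_neg hw]
  · rw [if_neg hs]

theorem gb_mem (hb : ∀ c : ConjClasses G, ConjClasses.mk (b c) = c)
    (hg : ∀ s : G, g s * b (ConjClasses.mk s) * (g s)⁻¹ = s) :
    g (b c) ∈ Subgroup.centralizer ({b c} : Set G) := by
  have h := hg (b c)
  rw [hb c] at h
  rw [Subgroup.mem_centralizer_singleton_iff]
  calc g (b c) * b c = (g (b c) * b c * (g (b c))⁻¹) * g (b c) := by group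
    _ = b c * g (b c) := by rw [h]

theorem E_eq_zero (hb : ∀ c : ConjClasses G, ConjClasses.mk (b c) = c)
    (hg : ∀ s : G, g s * b (ConjClasses.mk s) * (g s)⁻¹ = s)
    (f : MonoidAlgebra k ↥(Subgroup.centralizer ({b c} : Set G)))
    (h : doubleClassIdempotent b g c f = 0) : f = 0 := by
  ext w
  have hw := congrFun h (b c, g (b c) * ↑w * (g (b c))⁻¹)
  simp only [doubleClassIdempotent, Pi.zero_apply, if_pos (hb c)] at hw
  rw [show (g (b c))⁻¹ * (g (b c) * ↑w * (g (b c))⁻¹) * g (b c) = (↑w : G) by group] at hw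
  rw [subgroupCoeff, dif_pos w.2, Subtype.coe_eta] at hw
  rw [hw]
  rfl

theorem Phi_central (hb : ∀ c : ConjClasses G, ConjClasses.mk (b c) = c) (x : G × G → k)
    (hx : ∀ z, drinfeldDoubleMul x z = drinfeldDoubleMul z x) :
    ∀ y, PhiD b c x * y = y * PhiD b c x := by
  refine ga_central_of_conj _ fun a w => ?_
  rw [Phi_apply, Phi_apply]
  have hbc : (↑a)⁻¹ * b c * ↑a = b c := by
    have ha := Subgroup.mem_centralizer_singleton_iff.1 a.2
    calc (↑a)⁻¹ * b c * ↑a = (↑a)⁻¹ * (b c * ↑a) := by group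
      _ = (↑a)⁻¹ * (↑a * b c) := by rw [← ha]
      _ = b c := by group
  have key := dd_central_conj x hx (b c) ↑w ↑a
  rw [hbc] at key
  rw [show ((↑(a⁻¹ * w * a) : G)) = (↑a)⁻¹ * ↑w * ↑a by rfl]
  exact key

theorem Phi_mul (x y : G × G → k)
    (hx : ∀ z, drinfeldDoubleMul x z = drinfeldDoubleMul z x) :
    PhiD b c (drinfeldDoubleMul x y) = PhiD b c x * PhiD b c y := by
  ext t
  rw [ga_conv, Phi_apply]
  simp only [drinfeldDoubleMul]
  rw [coeff_sum_aux (Subgroup.centralizer ({b c} : Set G))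
    (fun u => x (b c, u) * y (u⁻¹ * b c * u, u⁻¹ * ↑t)) ?hT]
  case hT =>
    intro u hu
    show x (b c, u) * y (u⁻¹ * b c * u, u⁻¹ * ↑t) = 0
    rw [dd_central_supp x hx (b c) u ?_, zero_mul]
    intro hc
    apply hu
    rw [Subgroup.mem_centralizer_singleton_iff]
    have h2 := congrArg (fun z => u * z) hc
    calc u * b c = u * (u⁻¹ * b c * u) := h2.symm
      _ = b c * u := by group
  refine Finset.sum_congr rfl fun v _ => ?_
  have hv : (↑v)⁻¹ * b c * ↑v = b c := by
    have ha := Subgroup.mem_centralizer_singleton_iff.1 v.2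
    calc (↑v)⁻¹ * b c * ↑v = (↑v)⁻¹ * (b c * ↑v) := by group
      _ = (↑v)⁻¹ * (↑v * b c) := by rw [← ha]
      _ = b c := by group
  rw [hv, Phi_apply, Phi_apply]
  rfl

theorem E_Phi (hg : ∀ s : G, g s * b (ConjClasses.mk s) * (g s)⁻¹ = s) (x : G × G → k)
    (hx : ∀ z, drinfeldDoubleMul x z = drinfeldDoubleMul z x)
    (hsupp : ∀ s t : G, ConjClasses.mk s ≠ c → x (s, t) = 0) :
    doubleClassIdempotent b g c (PhiD b c x) = x := by
  funext p
  obtain ⟨s, t⟩ := p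
  rw [E_apply]
  by_cases hs : ConjClasses.mk s = c
  · rw [if_pos hs]
    have hsgs : (g s)⁻¹ * s * g s = b c := gs2 b g c hg hs
    by_cases hw : (g s)⁻¹ * t * g s ∈ Subgroup.centralizer ({b c} : Set G)
    · rw [subgroupCoeff, dif_pos hw, Phi_apply]
      have key := dd_central_conj x hx s t (g s)
      rwa [hsgs] at key
    · rw [subgroupCoeff, dif_neg hw]
      symm
      apply dd_central_supp x hx
      intro hc
      apply hw
      have hts : s * t = t * s := by
        calc s * t = t * (t⁻¹ * s * t) := by group
          _ = t * s := by rw [hc]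
      rw [Subgroup.mem_centralizer_singleton_iff, ← hsgs]
      calc (g s)⁻¹ * t * g s * ((g s)⁻¹ * s * g s) = (g s)⁻¹ * (t * s) * g s := by group
        _ = (g s)⁻¹ * (s * t) * g s := by rw [← hts]
        _ = (g s)⁻¹ * s * g s * ((g s)⁻¹ * t * g s) := by group
  · rw [if_neg hs]
    exact (hsupp s t hs).symm

theorem Phi_E (hb : ∀ c : ConjClasses G, ConjClasses.mk (b c) = c)
    (hg : ∀ s : G, g s * b (ConjClasses.mk s) * (g s)⁻¹ = s)
    (f : MonoidAlgebra k ↥(Subgroup.centralizer ({b c} : Set G)))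
    (hf : ∀ y, f * y = y * f) :
    PhiD b c (doubleClassIdempotent b g c f) = f := by
  ext w
  rw [Phi_apply, E_apply, if_pos (hb c),
    coeff_conj _ f hf _ (gb_mem b g c hb hg) _,
    subgroupCoeff, dif_pos w.2, Subtype.coe_eta]

theorem E_one_mul (hg : ∀ s : G, g s * b (ConjClasses.mk s) * (g s)⁻¹ = s) (x : G × G → k) :
    drinfeldDoubleMul (doubleClassIdempotent b g c (1 : MonoidAlgebra k _)) x
      = fun p => if ConjClasses.mk p.1 = c then x p else 0 := by
  funext p
  obtain ⟨s, t⟩ := p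
  simp only [drinfeldDoubleMul, E_apply]
  by_cases hs : ConjClasses.mk s = c
  · rw [if_pos hs, Finset.sum_eq_single 1]
    · rw [if_pos hs]
      have h1 : (g s)⁻¹ * 1 * g s = (1 : G) := by group
      rw [h1, subgroupCoeff, dif_pos (Subgroup.one_mem _)]
      have : MonoidAlgebra.coeff (1 : MonoidAlgebra k ↥(Subgroup.centralizer ({b c} : Set G)))
          ⟨(1 : G), Subgroup.one_mem _⟩ = 1 := by
        rw [MonoidAlgebra.one_def, MonoidAlgebra.coeff_single, Finsupp.single_apply, if_pos]
        rfl
      rw [this, one_mul]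
      norm_num
    · intro u _ hu
      rw [if_pos hs]
      have h0 : subgroupCoeff (Subgroup.centralizer ({b c} : Set G))
          (1 : MonoidAlgebra k _) ((g s)⁻¹ * u * g s) = 0 := by
        rw [subgroupCoeff]
        split
        · rename_i hmem
          rw [MonoidAlgebra.one_def, MonoidAlgebra.coeff_single, Finsupp.single_apply, if_neg]
          intro hc
          apply hu
          have : (g s)⁻¹ * u * g s = 1 := by
            have := congrArg (Subtype.val) hc
            exact this.symm
          have h2 : u = g s * 1 * (g s)⁻¹ := by
            rw [← this]; group
          rw [h2]; group
        · rfl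
      rw [h0, zero_mul]
    · intro h
      exact absurd (Finset.mem_univ _) h
  · rw [if_neg hs]
    refine Finset.sum_eq_zero fun u _ => ?_
    rw [if_neg hs, zero_mul]
end Phi

/-- **Classification of the centrally primitive idempotents of `D(G)`.**
Let `G` be a finite group and `k` a field of characteristic zero.  Fix for each
conjugacy class `c` a basepoint `b c ∈ c`, and for each `s ∈ G` an element `g s` with
`g s · b (mk s) · (g s)⁻¹ = s`.  Then for every conjugacy class `c` and every centrally
primitive idempotent `f` of the group algebra `k[C_G(b c)]`, the element `e_{c,f}` is a
centrally primitive idempotent of `D(G)`; it does not depend on the choice of the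
section `g`; and `(c, f) ↦ e_{c,f}` is a bijection from the set of such pairs onto the
set of centrally primitive idempotents of `D(G)`. -/
theorem drinfeldDouble_centrally_primitive_idempotents
    (k : Type*) [Field k] [CharZero k] (G : Type*) [Group G] [Fintype G]
    (b : ConjClasses G → G) (hb : ∀ c : ConjClasses G, ConjClasses.mk (b c) = c)
    (g : G → G) (hg : ∀ s : G, g s * b (ConjClasses.mk s) * (g s)⁻¹ = s) :
    -- (a) each `e_{c,f}` is a centrally primitive idempotent of `D(G)`
    (∀ (c : ConjClasses G) (f : MonoidAlgebra k ↥(Subgroup.centralizer ({b c} : Set G))),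
      IsCentrallyPrimitiveFor (· * ·) f →
      IsCentrallyPrimitiveFor drinfeldDoubleMul (doubleClassIdempotent b g c f)) ∧
    -- (b) `e_{c,f}` does not depend on the choice of the section `g`
    (∀ (g' : G → G), (∀ s : G, g' s * b (ConjClasses.mk s) * (g' s)⁻¹ = s) →
      ∀ (c : ConjClasses G) (f : MonoidAlgebra k ↥(Subgroup.centralizer ({b c} : Set G))),
        IsCentrallyPrimitiveFor (· * ·) f →
        doubleClassIdempotent b g c f = doubleClassIdempotent b g' c f) ∧
    -- (c) `(c, f) ↦ e_{c,f}` is injective on pairs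
    Function.Injective
      (fun p : Σ c : ConjClasses G,
          {f : MonoidAlgebra k ↥(Subgroup.centralizer ({b c} : Set G)) //
            IsCentrallyPrimitiveFor (· * ·) f} =>
        doubleClassIdempotent b g p.1 p.2.1) ∧
    -- (d) every centrally primitive idempotent of `D(G)` arises as some `e_{c,f}`
    (∀ e : G × G → k, IsCentrallyPrimitiveFor drinfeldDoubleMul e →
      ∃ (c : ConjClasses G)
        (f : MonoidAlgebra k ↥(Subgroup.centralizer ({b c} : Set G))),
        IsCentrallyPrimitiveFor (· * ·) f ∧ doubleClassIdempotent b g c f = e) := by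
  refine ⟨?parta, ?partb, ?partc, ?partd⟩
  case parta =>
    intro c f hf
    obtain ⟨hf0, hfc, hfi, hfp⟩ := hf
    have hfi' : f * f = f := hfi
    refine ⟨fun h => hf0 (E_eq_zero b g c hb hg f h), E_central b g c hg f hfc, ?_, ?_⟩
    · rw [E_mul b g c hg f f, hfi']
    · rintro ⟨e', e'', h1, h2, h3, h4, h5, h6, h7, h8⟩
      apply hfp
      have h7' : drinfeldDoubleMul e'' e' = 0 := (h3 e'').symm.trans h7
      have hee' : drinfeldDoubleMul (doubleClassIdempotent b g c f) e' = e' := by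
        rw [h8, dd_add_left, h5, h7', add_zero]
      have hE1f : drinfeldDoubleMul (doubleClassIdempotent b g c (1 : MonoidAlgebra k _))
          (doubleClassIdempotent b g c f) = doubleClassIdempotent b g c f := by
        rw [E_mul b g c hg, one_mul]
      have hsupp' : ∀ s t : G, ConjClasses.mk s ≠ c → e' (s, t) = 0 := by
        intro s t hs
        have hE1e : drinfeldDoubleMul (doubleClassIdempotent b g c (1 : MonoidAlgebra k _)) e'
            = e' := by
          rw [← hee', ← dd_assoc, hE1f]
        have h9 := congrFun hE1e.symm (s, t)
        rw [E_one_mul b g c hg e'] at h9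
        simpa [hs] using h9
      have hee'' : drinfeldDoubleMul (doubleClassIdempotent b g c f) e'' = e'' := by
        rw [h8, dd_add_left, h6, h7, zero_add]
      have hsupp'' : ∀ s t : G, ConjClasses.mk s ≠ c → e'' (s, t) = 0 := by
        intro s t hs
        have hE1e : drinfeldDoubleMul (doubleClassIdempotent b g c (1 : MonoidAlgebra k _)) e''
            = e'' := by
          rw [← hee'', ← dd_assoc, hE1f]
        have h9 := congrFun hE1e.symm (s, t)
        rw [E_one_mul b g c hg e''] at h9
        simpa [hs] using h9
      refine ⟨PhiD b c e', PhiD b c e'', ?_, ?_, Phi_central b c hb e' h3,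
        Phi_central b c hb e'' h4, ?_, ?_, ?_, ?_⟩
      · intro hz
        exact h1 (by rw [← E_Phi b g c hg e' h3 hsupp', hz, E_zero])
      · intro hz
        exact h2 (by rw [← E_Phi b g c hg e'' h4 hsupp'', hz, E_zero])
      · show PhiD b c e' * PhiD b c e' = PhiD b c e'
        rw [← Phi_mul b c e' e' h3, h5]
      · show PhiD b c e'' * PhiD b c e'' = PhiD b c e''
        rw [← Phi_mul b c e'' e'' h4, h6]
      · show PhiD b c e' * PhiD b c e'' = 0
        rw [← Phi_mul b c e' e'' h3, h7, Phi_zero]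
      · rw [← Phi_add, ← h8, Phi_E b g c hb hg f hfc]
  case partb =>
    intro g' hg' c f hf
    funext p
    obtain ⟨s, t⟩ := p
    rw [E_apply, E_apply]
    by_cases hs : ConjClasses.mk s = c
    · rw [if_pos hs, if_pos hs]
      have h1 : (g s)⁻¹ * s * g s = b c := gs2 b g c hg hs
      have h2 : (g' s)⁻¹ * s * g' s = b c := gs2 b g' c hg' hs
      have hmem : (g s)⁻¹ * g' s ∈ Subgroup.centralizer ({b c} : Set G) := by
        rw [Subgroup.mem_centralizer_singleton_iff]
        have key : ((g s)⁻¹ * g' s) * b c * ((g s)⁻¹ * g' s)⁻¹ = b c := by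
          conv_lhs => rw [← h2]
          conv_rhs => rw [← h1]
          group
        calc ((g s)⁻¹ * g' s) * b c
            = (((g s)⁻¹ * g' s) * b c * ((g s)⁻¹ * g' s)⁻¹) * ((g s)⁻¹ * g' s) := by group
          _ = b c * ((g s)⁻¹ * g' s) := by rw [key]
      have key2 := coeff_conj _ f hf.2.1 _ hmem ((g s)⁻¹ * t * g s)
      rw [show ((g s)⁻¹ * g' s)⁻¹ * ((g s)⁻¹ * t * g s) * ((g s)⁻¹ * g' s)
          = (g' s)⁻¹ * t * g' s by group] at key2
      exact key2.symm
    · rw [if_neg hs, if_neg hs]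
  case partc =>
    rintro ⟨c, f, hf⟩ ⟨c', f', hf'⟩ h
    simp only [] at h
    have hcc : c = c' := by
      by_contra hne
      have h0 : doubleClassIdempotent b g c f ≠ 0 :=
        fun hz => hf.1 (E_eq_zero b g c hb hg f hz)
      obtain ⟨p, hp⟩ := Function.ne_iff.1 h0
      obtain ⟨s, t⟩ := p
      have hs : ConjClasses.mk s = c := by
        by_contra hsc
        exact hp (by rw [E_apply, if_neg hsc]; rfl)
      have hs' : ConjClasses.mk s = c' := by
        by_contra hsc
        apply hp
        rw [h, E_apply, if_neg hsc]
        rfl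
      exact hne (hs.symm.trans hs')
    subst hcc
    have hff : f = f' := by
      rw [← Phi_E b g c hb hg f hf.2.1, h, Phi_E b g c hb hg f' hf'.2.1]
    subst hff
    rfl
  case partd =>
    intro e he
    obtain ⟨hne, hcent, hidem, hprim⟩ := he
    obtain ⟨p, hp⟩ := Function.ne_iff.1 hne
    obtain ⟨s1, t1⟩ := p
    set c := ConjClasses.mk s1 with hc
    set E1 := doubleClassIdempotent b g c
      (1 : MonoidAlgebra k ↥(Subgroup.centralizer ({b c} : Set G))) with hE1
    have hE1c : ∀ z, drinfeldDoubleMul E1 z = drinfeldDoubleMul z E1 :=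
      E_central b g c hg 1 (fun y => by rw [one_mul, mul_one])
    have hE1E1 : drinfeldDoubleMul E1 E1 = E1 := by rw [hE1, E_mul b g c hg, one_mul]
    set e0 := drinfeldDoubleMul E1 e with he0
    have he0app : ∀ s t : G, e0 (s, t) = if ConjClasses.mk s = c then e (s, t) else 0 := by
      intro s t
      rw [he0, hE1, E_one_mul b g c hg e]
    have he0ne : e0 ≠ 0 := by
      intro hz
      apply hp
      have h9 := congrFun hz (s1, t1)
      rw [he0app s1 t1, if_pos hc.symm] at h9
      exact h9
    have he0c : ∀ z, drinfeldDoubleMul e0 z = drinfeldDoubleMul z e0 :=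
      dd_central_mul E1 e hE1c hcent
    have hee0 : drinfeldDoubleMul e e0 = e0 := by
      rw [he0, ← dd_assoc, hcent E1, dd_assoc, hidem]
    have he0e : drinfeldDoubleMul e0 e = e0 := by
      rw [he0, dd_assoc, hidem]
    have he0e0 : drinfeldDoubleMul e0 e0 = e0 := by
      calc drinfeldDoubleMul e0 e0 = drinfeldDoubleMul E1 (drinfeldDoubleMul e e0) := by
            rw [he0, dd_assoc]
        _ = drinfeldDoubleMul E1 e0 := by rw [hee0]
        _ = drinfeldDoubleMul (drinfeldDoubleMul E1 E1) e := by rw [he0, ← dd_assoc]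
        _ = e0 := by rw [hE1E1, he0]
    have hrc : ∀ z, drinfeldDoubleMul (e - e0) z = drinfeldDoubleMul z (e - e0) :=
      dd_central_sub e e0 hcent he0c
    have hrr : drinfeldDoubleMul (e - e0) (e - e0) = e - e0 := by
      rw [dd_sub_left, dd_sub_right, dd_sub_right, hidem, hee0, he0e, he0e0]
      simp
    have he0r : drinfeldDoubleMul e0 (e - e0) = 0 := by
      rw [dd_sub_right, he0e, he0e0, sub_self]
    have hre0 : e - e0 = 0 := by
      by_contra hrne
      exact hprim ⟨e0, e - e0, he0ne, hrne, he0c, hrc, he0e0, hrr, he0r, by abel⟩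
    have hee : e = e0 := by
      have := sub_eq_zero.1 hre0
      exact this
    have hsupp : ∀ s t : G, ConjClasses.mk s ≠ c → e (s, t) = 0 := by
      intro s t hs
      have h9 := congrFun hee (s, t)
      rw [he0app s t, if_neg hs] at h9
      exact h9
    refine ⟨c, PhiD b c e, ⟨?_, Phi_central b c hb e hcent, ?_, ?_⟩,
      E_Phi b g c hg e hcent hsupp⟩
    · intro hz
      apply hne
      rw [← E_Phi b g c hg e hcent hsupp, hz, E_zero]
    · show PhiD b c e * PhiD b c e = PhiD b c e
      rw [← Phi_mul b c e e hcent, hidem]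
    · rintro ⟨f', f'', n1, n2, c1, c2, i1, i2, o12, hsum⟩
      apply hprim
      have i1' : f' * f' = f' := i1
      have i2' : f'' * f'' = f'' := i2
      have o12' : f' * f'' = 0 := o12
      refine ⟨doubleClassIdempotent b g c f', doubleClassIdempotent b g c f'',
        fun hz => n1 (E_eq_zero b g c hb hg f' hz),
        fun hz => n2 (E_eq_zero b g c hb hg f'' hz),
        E_central b g c hg f' c1, E_central b g c hg f'' c2, ?_, ?_, ?_, ?_⟩
      · rw [E_mul b g c hg, i1']
      · rw [E_mul b g c hg, i2']
      · rw [E_mul b g c hg, o12', E_zero]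
      · rw [← E_add b g c f' f'', ← hsum, E_Phi b g c hg e hcent hsupp]
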